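/- For every integer r ≥ 1, the Ramsey number R(𝒫₄;r) satisfies R(𝒫₄;r) ≥ r + max{s_r, t_r} + 1, where s_r = max{ s ∈ ℤ : Σ_{k=6}^{s} C(k,2) ≤ r − 1 } and t_r = max{ t ∈ ℤ : C(t,3) ≤ r }. In particular, R(𝒫₄;r) ≥ r + 6 for all r ≥ 1. -/

import Mathlib

open Finset

/-- Four edges form a 3-uniform minimal 4-path: `aᵢ ∩ aⱼ ≠ ∅ ↔ |i - j| ≤ 1`. -/
def IsMinPath4 {α : Type*} [DecidableEq α] (a₀ a₁ a₂ a₃ : Finset α) : Prop :=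
  (a₀ ∩ a₁).Nonempty ∧ (a₁ ∩ a₂).Nonempty ∧ (a₂ ∩ a₃).Nonempty ∧
    a₀ ∩ a₂ = ∅ ∧ a₀ ∩ a₃ = ∅ ∧ a₁ ∩ a₃ = ∅

/-- The `r`-coloring `c` of the edges of the complete 3-graph on `Fin n`
yields a monochromatic minimal 4-path. -/
def HasMonoP4 {n r : ℕ} (c : Finset (Fin n) → Fin r) : Prop :=
  ∃ a₀ a₁ a₂ a₃ : Finset (Fin n),
    a₀.card = 3 ∧ a₁.card = 3 ∧ a₂.card = 3 ∧ a₃.card = 3 ∧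
    IsMinPath4 a₀ a₁ a₂ a₃ ∧
    c a₀ = c a₁ ∧ c a₁ = c a₂ ∧ c a₂ = c a₃

/-- Key lemma: if every color class is either (a) a star plus at most one extra
edge, or (b) supported on at most 6 vertices, then there is no monochromatic
minimal 4-path. -/
lemma noMono {n r : ℕ} (c : Finset (Fin n) → Fin r)
    (h : ∀ j : Fin r,
      (∃ x f, ∀ e, e.card = 3 → c e = j → x ∈ e ∨ e = f) ∨
      (∃ S : Finset (Fin n), S.card ≤ 6 ∧ ∀ e, e.card = 3 → c e = j → e ⊆ S)) :
    ¬ HasMonoP4 c := by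
  rintro ⟨a₀, a₁, a₂, a₃, c0, c1, c2, c3, ⟨h01, h12, h23, h02, h03, h13⟩, e01, e12, e23⟩
  have d01 : a₀ ≠ a₁ := by
    intro hEq; rw [hEq] at h02; rw [h02] at h12; simp at h12
  have d12 : a₁ ≠ a₂ := by
    intro hEq; rw [hEq] at h13; rw [h13] at h23; simp at h23
  have d23 : a₂ ≠ a₃ := by
    intro hEq; rw [← hEq] at h13; rw [h13] at h12; simp at h12
  have d02 : a₀ ≠ a₂ := by
    intro hEq; rw [hEq, inter_self] at h02; rw [h02] at c2; simp at c2
  have d03 : a₀ ≠ a₃ := by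
    intro hEq; rw [hEq, inter_self] at h03; rw [h03] at c3; simp at c3
  have d13 : a₁ ≠ a₃ := by
    intro hEq; rw [hEq, inter_self] at h13; rw [h13] at c3; simp at c3
  have cc1 : c a₁ = c a₀ := e01.symm
  have cc2 : c a₂ = c a₀ := (e01.trans e12).symm
  have cc3 : c a₃ = c a₀ := (e01.trans (e12.trans e23)).symm
  rcases h (c a₀) with ⟨x, f, hx⟩ | ⟨S, hS6, hSS⟩
  · have H0 := hx a₀ c0 rfl
    have H1 := hx a₁ c1 cc1
    have H2 := hx a₂ c2 cc2
    have H3 := hx a₃ c3 cc3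
    have E01 : a₀ = f → a₁ = f → False := fun p q => d01 (p.trans q.symm)
    have E02 : a₀ = f → a₂ = f → False := fun p q => d02 (p.trans q.symm)
    have E03 : a₀ = f → a₃ = f → False := fun p q => d03 (p.trans q.symm)
    have E12 : a₁ = f → a₂ = f → False := fun p q => d12 (p.trans q.symm)
    have E13 : a₁ = f → a₃ = f → False := fun p q => d13 (p.trans q.symm)
    have E23 : a₂ = f → a₃ = f → False := fun p q => d23 (p.trans q.symm)
    have key : (x ∈ a₀ ∧ x ∈ a₂) ∨ (x ∈ a₀ ∧ x ∈ a₃) ∨ (x ∈ a₁ ∧ x ∈ a₃) := by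
      rcases H0 with x0 | f0 <;> rcases H1 with x1 | f1 <;>
        rcases H2 with x2 | f2 <;> rcases H3 with x3 | f3 <;>
        first
        | exact Or.inl ⟨x0, x2⟩
        | exact Or.inr (Or.inl ⟨x0, x3⟩)
        | exact Or.inr (Or.inr ⟨x1, x3⟩)
        | exact (E01 f0 f1).elim
        | exact (E02 f0 f2).elim
        | exact (E03 f0 f3).elim
        | exact (E12 f1 f2).elim
        | exact (E13 f1 f3).elim
        | exact (E23 f2 f3).elim
    rcases key with ⟨p, q⟩ | ⟨p, q⟩ | ⟨p, q⟩
    · have hm := mem_inter.mpr ⟨p, q⟩; rw [h02] at hm; exact absurd hm (notMem_empty x)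
    · have hm := mem_inter.mpr ⟨p, q⟩; rw [h03] at hm; exact absurd hm (notMem_empty x)
    · have hm := mem_inter.mpr ⟨p, q⟩; rw [h13] at hm; exact absurd hm (notMem_empty x)
  · have s0 : a₀ ⊆ S := hSS a₀ c0 rfl
    have s2 : a₂ ⊆ S := hSS a₂ c2 cc2
    have s3 : a₃ ⊆ S := hSS a₃ c3 cc3
    have hd : Disjoint a₀ a₂ := disjoint_iff_inter_eq_empty.mpr h02
    have hu : (a₀ ∪ a₂).card = 6 := by
      rw [card_union_of_disjoint hd, c0, c2]
    have hex : ∃ v ∈ a₃, v ∉ a₀ ∪ a₂ := by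
      by_contra hcon
      push_neg at hcon
      have hsub : a₃ ⊆ a₂ := by
        intro v hv
        rcases mem_union.mp (hcon v hv) with h' | h'
        · have hm := mem_inter.mpr ⟨h', hv⟩
          rw [h03] at hm; exact absurd hm (notMem_empty v)
        · exact h'
      have : a₃ = a₂ := eq_of_subset_of_card_le hsub (by rw [c2, c3])
      exact d23 this.symm
    obtain ⟨v, hv3, hvn⟩ := hex
    have h7 : (insert v (a₀ ∪ a₂)).card = 7 := by
      rw [card_insert_of_notMem hvn, hu]
    have hsubS : insert v (a₀ ∪ a₂) ⊆ S := by
      intro w hw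
      rcases mem_insert.mp hw with rfl | hw'
      · exact s3 hv3
      · rcases mem_union.mp hw' with h' | h'
        · exact s0 h'
        · exact s2 h'
    have := card_le_card hsubS
    omega

/-- Cardinality of the set of "top" vertices. -/
lemma card_filter_ge (n m : ℕ) :
    ((univ : Finset (Fin n)).filter fun v : Fin n => m ≤ (v : ℕ)).card = n - m := by
  rw [← Nat.card_Ico m n]
  refine Finset.card_bij (fun (v : Fin n) _ => (v : ℕ)) ?_ ?_ ?_
  · intro a ha
    rw [mem_filter] at ha
    rw [mem_Ico]
    exact ⟨ha.2, a.isLt⟩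
  · intro a _ b _ hab
    exact Fin.ext hab
  · intro b hb
    rw [mem_Ico] at hb
    refine ⟨⟨b, hb.2⟩, ?_, rfl⟩
    rw [mem_filter]
    exact ⟨mem_univ _, hb.1⟩

lemma sum_choose_id : ∀ s : ℕ, 5 ≤ s →
    (s + 1).choose 3 = 20 + ∑ k ∈ Icc 6 s, Nat.choose k 2 := by
  intro s hs
  induction s, hs using Nat.le_induction with
  | base =>
    rw [show Icc 6 5 = (∅ : Finset ℕ) from Finset.Icc_eq_empty (by omega)]
    simp only [Finset.sum_empty]
    decide
  | succ s hs ih =>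
    rw [Finset.sum_Icc_succ_top (by omega : 6 ≤ s + 1)]
    have h2 : (s + 1 + 1).choose 3 = (s + 1).choose 2 + (s + 1).choose 3 :=
      Nat.choose_succ_succ (s + 1) 2
    omega

/-- Construction 2: stars at the low vertices, each absorbing at most one
edge from the top `K` vertices. -/
lemma build2 {n r K : ℕ} (hr : 1 ≤ r) (hn : 1 ≤ n) (hnrK : n ≤ r + K)
    (hK : K.choose 3 ≤ r) : ∃ c : Finset (Fin n) → Fin r, ¬ HasMonoP4 c := by
  classical
  set T : Finset (Fin n) := univ.filter (fun v => n - K ≤ (v : ℕ)) with hT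
  set A : Finset (Finset (Fin n)) := powersetCard 3 T with hA
  have hTcard : T.card = n - (n - K) := card_filter_ge n (n - K)
  have hAcard : A.card ≤ r := by
    rw [hA, card_powersetCard, hTcard]
    exact le_trans (Nat.choose_le_choose 3 (by omega)) hK
  set low : Finset (Fin n) → Finset (Fin n) :=
    fun e => e.filter (fun v => (v : ℕ) < n - K) with hlow
  set enc : Finset (Fin n) → ℕ :=
    fun e => if he : e ∈ A then (A.equivFin ⟨e, he⟩ : Fin A.card) else 0 with henc
  have enclt : ∀ e ∈ A, enc e < r := by
    intro e he
    rw [henc]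
    simp only [dif_pos he]
    exact lt_of_lt_of_le (Fin.is_lt _) hAcard
  have encinj : ∀ e ∈ A, ∀ e' ∈ A, enc e = enc e' → e = e' := by
    intro e he e' he' hee
    rw [henc] at hee
    simp only [dif_pos he, dif_pos he'] at hee
    have := A.equivFin.injective (Fin.ext hee)
    exact Subtype.ext_iff.mp this
  set cval : Finset (Fin n) → ℕ := fun e =>
    if hl : (low e).Nonempty then ((low e).min' hl : Fin n) else enc e with hcval
  have cvlt : ∀ e, cval e < r := by
    intro e
    rw [hcval]
    by_cases hl : (low e).Nonempty
    · simp only [dif_pos hl]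
      have hm := (low e).min'_mem hl
      have h2 : ((low e).min' hl) ∈ e ∧ (((low e).min' hl : Fin n) : ℕ) < n - K :=
        mem_filter.mp hm
      omega
    · simp only [dif_neg hl]
      by_cases he : e ∈ A
      · exact enclt e he
      · rw [henc]; simp only [dif_neg he]; omega
  refine ⟨fun e => ⟨cval e, cvlt e⟩, noMono _ ?_⟩
  intro j
  left
  refine ⟨⟨(j : ℕ) % n, Nat.mod_lt _ (by omega)⟩,
    if hex : ∃ e ∈ A, enc e = (j : ℕ) then hex.choose else ∅, ?_⟩
  intro e he3 hce
  have hv : cval e = (j : ℕ) := congrArg Fin.val hce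
  by_cases hl : (low e).Nonempty
  · left
    have hval : (((low e).min' hl : Fin n) : ℕ) = (j : ℕ) := by
      rw [← hv, hcval]; simp only [dif_pos hl]
    have hmem := (low e).min'_mem hl
    have h2 : ((low e).min' hl) ∈ e ∧ (((low e).min' hl : Fin n) : ℕ) < n - K :=
      mem_filter.mp hmem
    have hjn : (j : ℕ) < n := by omega
    have hEq : (⟨(j : ℕ) % n, Nat.mod_lt _ (by omega)⟩ : Fin n) = (low e).min' hl :=
      Fin.ext (by simp only [Nat.mod_eq_of_lt hjn]; omega)
    rw [hEq]
    exact h2.1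
  · right
    have heA : e ∈ A := by
      rw [hA, mem_powersetCard]
      refine ⟨?_, he3⟩
      intro v hv'
      rw [hT, mem_filter]
      refine ⟨mem_univ v, ?_⟩
      by_contra hc
      push_neg at hc
      exact hl ⟨v, by rw [hlow]; exact mem_filter.mpr ⟨hv', hc⟩⟩
    have hval : enc e = (j : ℕ) := by
      rw [← hv, hcval]; simp only [dif_neg hl]
    have hex : ∃ e' ∈ A, enc e' = (j : ℕ) := ⟨e, heA, hval⟩
    rw [dif_pos hex]
    obtain ⟨hf1, hf2⟩ := hex.choose_spec
    exact encinj e heA _ hf1 (by rw [hval, hf2])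

/-- Construction 1: stars at the low vertices, each absorbing at most one
top edge not inside the top six vertices; one extra color for the edges inside
the top six vertices. -/
lemma build1 {n r K : ℕ} (hr : 1 ≤ r) (hn : 7 ≤ n) (hK6 : 6 ≤ K)
    (hnrK : n ≤ r - 1 + K) (hCK : K.choose 3 ≤ 19 + r) :
    ∃ c : Finset (Fin n) → Fin r, ¬ HasMonoP4 c := by
  classical
  set T : Finset (Fin n) := univ.filter (fun v => n - K ≤ (v : ℕ)) with hT
  set S : Finset (Fin n) := univ.filter (fun v => n - 6 ≤ (v : ℕ)) with hS
  set A : Finset (Finset (Fin n)) :=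
    (powersetCard 3 T).filter (fun e => ¬ e ⊆ S) with hA
  have hTcard : T.card = n - (n - K) := card_filter_ge n (n - K)
  have hScard : S.card = 6 := by
    rw [hS, card_filter_ge n (n - 6)]; omega
  have hSsubT : S ⊆ T := by
    intro v hv
    rw [hS, mem_filter] at hv
    rw [hT, mem_filter]
    refine ⟨mem_univ v, ?_⟩
    have := hv.2
    omega
  have hAcard : A.card ≤ r - 1 := by
    have h1 : ((powersetCard 3 T).filter (fun e => e ⊆ S)).card + A.card
        = (T.card).choose 3 := by
      rw [hA, ← card_powersetCard 3 T]
      exact card_filter_add_card_filter_not (fun e => e ⊆ S)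
    have h2 : (powersetCard 3 T).filter (fun e => e ⊆ S) = powersetCard 3 S := by
      ext e
      simp only [mem_filter, mem_powersetCard]
      constructor
      · rintro ⟨⟨_, hc⟩, hs⟩; exact ⟨hs, hc⟩
      · rintro ⟨hs, hc⟩; exact ⟨⟨hs.trans hSsubT, hc⟩, hs⟩
    rw [h2, card_powersetCard, hScard] at h1
    have h3 : Nat.choose 6 3 = 20 := by decide
    have h4 : (T.card).choose 3 ≤ K.choose 3 :=
      Nat.choose_le_choose 3 (by omega)
    omega
  set low : Finset (Fin n) → Finset (Fin n) :=
    fun e => e.filter (fun v => (v : ℕ) < n - K) with hlow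
  set enc : Finset (Fin n) → ℕ :=
    fun e => if he : e ∈ A then (A.equivFin ⟨e, he⟩ : Fin A.card) else 0 with henc
  have enclt : ∀ e ∈ A, enc e < r - 1 := by
    intro e he
    rw [henc]
    simp only [dif_pos he]
    exact lt_of_lt_of_le (Fin.is_lt _) hAcard
  have encinj : ∀ e ∈ A, ∀ e' ∈ A, enc e = enc e' → e = e' := by
    intro e he e' he' hee
    rw [henc] at hee
    simp only [dif_pos he, dif_pos he'] at hee
    have := A.equivFin.injective (Fin.ext hee)
    exact Subtype.ext_iff.mp this
  set cval : Finset (Fin n) → ℕ := fun e =>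
    if hl : (low e).Nonempty then ((low e).min' hl : Fin n)
    else if e ∈ A then enc e else r - 1 with hcval
  have cvlt : ∀ e, cval e < r := by
    intro e
    rw [hcval]
    by_cases hl : (low e).Nonempty
    · simp only [dif_pos hl]
      have hm := (low e).min'_mem hl
      have h2 : ((low e).min' hl) ∈ e ∧ (((low e).min' hl : Fin n) : ℕ) < n - K :=
        mem_filter.mp hm
      omega
    · simp only [dif_neg hl]
      by_cases he : e ∈ A
      · rw [if_pos he]
        have := enclt e he
        omega
      · rw [if_neg he]; omega
  refine ⟨fun e => ⟨cval e, cvlt e⟩, noMono _ ?_⟩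
  intro j
  by_cases hj : (j : ℕ) = r - 1
  · right
    refine ⟨S, hScard.le, ?_⟩
    intro e he3 hce
    have hv : cval e = (j : ℕ) := congrArg Fin.val hce
    rw [hcval] at hv
    by_cases hl : (low e).Nonempty
    · exfalso
      simp only [dif_pos hl] at hv
      have hm := (low e).min'_mem hl
      have h2 : ((low e).min' hl) ∈ e ∧ (((low e).min' hl : Fin n) : ℕ) < n - K :=
        mem_filter.mp hm
      omega
    · simp only [dif_neg hl] at hv
      by_cases he : e ∈ A
      · exfalso
        rw [if_pos he] at hv
        have := enclt e he
        omega
      · -- e has card 3, no low vertex, not in A: so e ⊆ S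
        have heT : e ⊆ T := by
          intro v hv'
          rw [hT, mem_filter]
          refine ⟨mem_univ v, ?_⟩
          by_contra hc
          push_neg at hc
          exact hl ⟨v, by rw [hlow]; exact mem_filter.mpr ⟨hv', hc⟩⟩
        by_contra hnS
        exact he (by rw [hA, mem_filter, mem_powersetCard]; exact ⟨⟨heT, he3⟩, hnS⟩)
  · left
    refine ⟨⟨(j : ℕ) % n, Nat.mod_lt _ (by omega)⟩,
      if hex : ∃ e ∈ A, enc e = (j : ℕ) then hex.choose else ∅, ?_⟩
    intro e he3 hce
    have hv : cval e = (j : ℕ) := congrArg Fin.val hce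
    rw [hcval] at hv
    by_cases hl : (low e).Nonempty
    · left
      simp only [dif_pos hl] at hv
      have hmem := (low e).min'_mem hl
      have h2 : ((low e).min' hl) ∈ e ∧ (((low e).min' hl : Fin n) : ℕ) < n - K :=
        mem_filter.mp hmem
      have hjn : (j : ℕ) < n := by omega
      have hEq : (⟨(j : ℕ) % n, Nat.mod_lt _ (by omega)⟩ : Fin n) = (low e).min' hl :=
        Fin.ext (by simp only [Nat.mod_eq_of_lt hjn]; omega)
      rw [hEq]
      exact h2.1
    · right
      simp only [dif_neg hl] at hv
      have heA : e ∈ A := by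
        by_contra he
        rw [if_neg he] at hv
        exact hj hv.symm
      rw [if_pos heA] at hv
      have hex : ∃ e' ∈ A, enc e' = (j : ℕ) := ⟨e, heA, hv⟩
      rw [dif_pos hex]
      obtain ⟨hf1, hf2⟩ := hex.choose_spec
      exact encinj e heA _ hf1 (by rw [hv, hf2])

/-- Proposition 7.1: for every `r ≥ 1`, `R(𝒫₄; r) ≥ r + max{sᵣ, tᵣ} + 1`,
where `sᵣ = max{s : ∑_{k=6}^{s} C(k,2) ≤ r - 1}` and
`tᵣ = max{t : C(t,3) ≤ r}`; in particular `R(𝒫₄; r) ≥ r + 6`.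
(The lower bound `R(𝒫₄; r) ≥ m + 1` is expressed as: for every `n ≤ m` there
is an `r`-coloring of `K⁽³⁾ₙ` with no monochromatic minimal 4-path.) -/
theorem ramsey_P4_lower (r : ℕ) (hr : 1 ≤ r) :
    (∀ s t : ℕ, (∑ k ∈ Finset.Icc 6 s, Nat.choose k 2) ≤ r - 1 →
      Nat.choose t 3 ≤ r →
      ∀ n : ℕ, n < r + max s t + 1 →
        ∃ c : Finset (Fin n) → Fin r, ¬HasMonoP4 c) ∧
    (∀ n : ℕ, n < r + 6 → ∃ c : Finset (Fin n) → Fin r, ¬HasMonoP4 c) := by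
  have main : ∀ s t : ℕ, (∑ k ∈ Finset.Icc 6 s, Nat.choose k 2) ≤ r - 1 →
      Nat.choose t 3 ≤ r →
      ∀ n : ℕ, n < r + max s t + 1 →
        ∃ c : Finset (Fin n) → Fin r, ¬HasMonoP4 c := by
    intro s t hs ht n hn
    by_cases h6 : n ≤ 6
    · refine ⟨fun _ => ⟨0, hr⟩, noMono _ (fun j => Or.inr ⟨univ, ?_, fun e _ _ => subset_univ e⟩)⟩
      rw [card_univ, Fintype.card_fin]
      exact h6
    · have hn7 : 7 ≤ n := by omega
      rcases le_total s t with hst | hst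
      · -- max = t, use build2
        have hnt : n ≤ r + t := by
          have := max_eq_right hst
          omega
        exact build2 hr (by omega) hnt ht
      · -- max = s, use build1 with K = max (s+1) 6
        have hns : n ≤ r + s := by
          have := max_eq_left hst
          omega
        rcases le_or_gt 5 s with h5 | h5
        · have hK : max (s + 1) 6 = s + 1 := max_eq_left (by omega)
          refine build1 (K := max (s + 1) 6) hr hn7 (le_max_right _ _) ?_ ?_
          · rw [hK]; omega
          · rw [hK]
            have hid := sum_choose_id s h5
            omega
        · have hK : max (s + 1) 6 = 6 := max_eq_right (by omega)
          refine build1 (K := max (s + 1) 6) hr hn7 (le_max_right _ _) ?_ ?_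
          · rw [hK]; omega
          · rw [hK]
            have : Nat.choose 6 3 = 20 := by decide
            omega
  refine ⟨main, fun n hn => main 5 0 ?_ ?_ n ?_⟩
  · rw [show Finset.Icc 6 5 = (∅ : Finset ℕ) from Finset.Icc_eq_empty (by omega)]
    simp
  · simp [Nat.choose]
  · simp; omega
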